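/- Consider the approximate modal evaluation in structures A = ((I,J), W). Suppose A' = ((I',J'), W') is more precise than A, meaning I ⊆ I', J' ⊆ J, and every pair in W' is a refinement of some pair in W (i.e., for each (I'₁,J'₁) ∈ W' there is (I₁,J₁) ∈ W with I₁ ⊆ I'₁ and J'₁ ⊆ J₁), with possibly some pairs of W having no refinement in W'. Then for any FO(K) formula φ in which every modal literal occurs positively (under an even number of negations): if A ⊨ φ then A' ⊨ φ. -/
import Mathlib


/-- Propositional formulas over a set of atoms `α`, built with ¬, ∧, ∨. -/
inductive PForm (α : Type) : Type
  | atom : α → PForm α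
  | neg  : PForm α → PForm α
  | conj : PForm α → PForm α → PForm α
  | disj : PForm α → PForm α → PForm α

/-- Classical satisfaction `I ⊨ φ`; an interpretation is a set of true atoms. -/
def PForm.sat {α : Type} (I : Set α) : PForm α → Prop
  | .atom p => p ∈ I
  | .neg ψ => ¬ PForm.sat I ψ
  | .conj a b => PForm.sat I a ∧ PForm.sat I b
  | .disj a b => PForm.sat I a ∨ PForm.sat I b

/-- Pair evaluation `(I,J) ⊨ φ`: atoms in `I`, the pair is swapped at negations. -/
def PForm.psat {α : Type} : Set α → Set α → PForm α → Prop
  | I, _, .atom p => p ∈ I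
  | I, J, .neg ψ => ¬ PForm.psat J I ψ
  | I, J, .conj a b => PForm.psat I J a ∧ PForm.psat I J b
  | I, J, .disj a b => PForm.psat I J a ∨ PForm.psat I J b

/-- FO(K)-style formulas without nesting of K: propositional formulas extended
    with modal literals `K ψ` where ψ is modal-free. -/
inductive MForm (α : Type) : Type
  | atom : α → MForm α
  | K    : PForm α → MForm α
  | neg  : MForm α → MForm α
  | conj : MForm α → MForm α → MForm α
  | disj : MForm α → MForm α → MForm α

/-- Satisfaction in a knowledge structure (I, W): atoms in I, `K ψ` holds iff
    ψ holds classically in every world of W. -/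
def MForm.msat {α : Type} (I : Set α) (W : Set (Set α)) : MForm α → Prop
  | .atom p => p ∈ I
  | .K ψ => ∀ J ∈ W, PForm.sat J ψ
  | .neg φ => ¬ MForm.msat I W φ
  | .conj a b => MForm.msat I W a ∧ MForm.msat I W b
  | .disj a b => MForm.msat I W a ∨ MForm.msat I W b

/-- Reverse an approximating pair. -/
def prRev {α : Type} (pr : Set α × Set α) : Set α × Set α := (pr.2, pr.1)

/-- Approximate modal evaluation in an approximate knowledge structure
    ((I,J), W): atoms in I; `K ψ` holds iff ψ holds at every pair of W;
    negation swaps the outer pair and reverses every pair of W. -/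
def MForm.asat {α : Type} : Set α × Set α → Set (Set α × Set α) → MForm α → Prop
  | pr, _, .atom p => p ∈ pr.1
  | _, W, .K ψ => ∀ pr' ∈ W, PForm.psat pr'.1 pr'.2 ψ
  | pr, W, .neg φ => ¬ MForm.asat (pr.2, pr.1) (prRev '' W) φ
  | pr, W, .conj a b => MForm.asat pr W a ∧ MForm.asat pr W b
  | pr, W, .disj a b => MForm.asat pr W a ∨ MForm.asat pr W b

/-- Embedding of modal-free formulas into FO(K) formulas. -/
def PForm.toM {α : Type} : PForm α → MForm α
  | .atom p => MForm.atom p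
  | .neg φ => MForm.neg (PForm.toM φ)
  | .conj a b => MForm.conj (PForm.toM a) (PForm.toM b)
  | .disj a b => MForm.disj (PForm.toM a) (PForm.toM b)

mutual
/-- All modal literals of φ occur under an even number of negations. -/
def MForm.posK {α : Type} : MForm α → Prop
  | .atom _ => True
  | .K _ => True
  | .neg φ => MForm.negK φ
  | .conj a b => MForm.posK a ∧ MForm.posK b
  | .disj a b => MForm.posK a ∧ MForm.posK b

/-- All modal literals of φ occur under an odd number of negations. -/
def MForm.negK {α : Type} : MForm α → Prop
  | .atom _ => True
  | .K _ => False
  | .neg φ => MForm.posK φ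
  | .conj a b => MForm.negK a ∧ MForm.negK b
  | .disj a b => MForm.negK a ∧ MForm.negK b
end


lemma psat_mono {α : Type} (φ : PForm α) : ∀ I I' J J' : Set α,
    I ⊆ I' → J' ⊆ J → PForm.psat I J φ → PForm.psat I' J' φ := by
  induction φ with
  | atom p => intro I I' J J' hI hJ h; exact hI h
  | neg ψ ih =>
      intro I I' J J' hI hJ h hc
      exact h (ih J' J I' I hJ hI hc)
  | conj a b iha ihb =>
      intro I I' J J' hI hJ h
      exact ⟨iha I I' J J' hI hJ h.1, ihb I I' J J' hI hJ h.2⟩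
  | disj a b iha ihb =>
      intro I I' J J' hI hJ h
      exact h.imp (iha I I' J J' hI hJ) (ihb I I' J J' hI hJ)

lemma asat_both {α : Type} (φ : MForm α) :
    ∀ (I I' J J' : Set α) (W W' : Set (Set α × Set α)), I ⊆ I' → J' ⊆ J →
    ((∀ pr' ∈ W', ∃ pr ∈ W, pr.1 ⊆ pr'.1 ∧ pr'.2 ⊆ pr.2) → MForm.posK φ →
      MForm.asat (I, J) W φ → MForm.asat (I', J') W' φ) ∧
    ((∀ pr ∈ W, ∃ pr' ∈ W', pr.1 ⊆ pr'.1 ∧ pr'.2 ⊆ pr.2) → MForm.negK φ →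
      MForm.asat (I, J) W φ → MForm.asat (I', J') W' φ) := by
  induction φ with
  | atom p =>
      intro I I' J J' W W' hI hJ
      exact ⟨fun _ _ h => hI h, fun _ _ h => hI h⟩
  | K ψ =>
      intro I I' J J' W W' hI hJ
      refine ⟨fun hW _ h pr' hpr' => ?_, fun _ hneg => hneg.elim⟩
      obtain ⟨pr, hpr, h1, h2⟩ := hW pr' hpr'
      exact psat_mono ψ pr.1 pr'.1 pr.2 pr'.2 h1 h2 (h pr hpr)
  | neg φ ih =>
      intro I I' J J' W W' hI hJ
      constructor
      · intro hW hneg h hc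
        refine h ((ih J' J I' I (prRev '' W') (prRev '' W) hJ hI).2 ?_ hneg hc)
        rintro q ⟨pr', hpr', rfl⟩
        obtain ⟨pr, hpr, h1, h2⟩ := hW pr' hpr'
        exact ⟨prRev pr, ⟨pr, hpr, rfl⟩, h2, h1⟩
      · intro hW hpos h hc
        refine h ((ih J' J I' I (prRev '' W') (prRev '' W) hJ hI).1 ?_ hpos hc)
        rintro q ⟨pr, hpr, rfl⟩
        obtain ⟨pr', hpr', h1, h2⟩ := hW pr hpr
        exact ⟨prRev pr', ⟨pr', hpr', rfl⟩, h2, h1⟩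
  | conj a b iha ihb =>
      intro I I' J J' W W' hI hJ
      constructor
      · intro hW hp h
        exact ⟨(iha I I' J J' W W' hI hJ).1 hW hp.1 h.1,
               (ihb I I' J J' W W' hI hJ).1 hW hp.2 h.2⟩
      · intro hW hp h
        exact ⟨(iha I I' J J' W W' hI hJ).2 hW hp.1 h.1,
               (ihb I I' J J' W W' hI hJ).2 hW hp.2 h.2⟩
  | disj a b iha ihb =>
      intro I I' J J' W W' hI hJ
      constructor
      · intro hW hp h
        exact h.imp ((iha I I' J J' W W' hI hJ).1 hW hp.1)
                    ((ihb I I' J J' W W' hI hJ).1 hW hp.2)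
      · intro hW hp h
        exact h.imp ((iha I I' J J' W W' hI hJ).2 hW hp.1)
                    ((ihb I I' J J' W W' hI hJ).2 hW hp.2)

/-- Approximate modal evaluation of formulas whose modal literals all occur
    positively is monotone under refinement of the approximate knowledge
    structure. -/
theorem asat_mono_refine_of_posK {α : Type} [Fintype α]
    (φ : MForm α) (hpos : MForm.posK φ)
    (I I' J J' : Set α) (W W' : Set (Set α × Set α))
    (hI : I ⊆ I') (hJ : J' ⊆ J)
    (hW : ∀ pr' ∈ W', ∃ pr ∈ W, pr.1 ⊆ pr'.1 ∧ pr'.2 ⊆ pr.2)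
    (h : MForm.asat (I, J) W φ) :
    MForm.asat (I', J') W' φ :=
  (asat_both φ I I' J J' W W' hI hJ).1 hW hpos h
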